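/- Let A and B be commutative unital complex normed algebras and let f : A → B be a continuous injective unital algebra homomorphism such that B is an integral extension of f(A), i.e., every b ∈ B is a root of some monic polynomial with coefficients in f(A). Suppose that A is a full subalgebra of its completion Ã, meaning that every a ∈ A whose image in à is invertible in à is already invertible in A, and that the set of invertible elements of A is dense in A. Then the set of invertible elements of B is dense in B. -/

import Mathlib

open Polynomial Filter Metric Topology

section Aux

variable {C : Type*} [NormedCommRing C] [NormedAlgebra ℂ C]

/-- Strict derivative of `x ↦ x ^ n` on a commutative normed algebra. -/
lemma hasStrictFDerivAt_pow_aux (n : ℕ) (x : C) :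
    HasStrictFDerivAt (fun y : C => y ^ n)
      (ContinuousLinearMap.mul ℂ C ((n : C) * x ^ (n - 1))) x := by
  induction n with
  | zero =>
      simp only [pow_zero, Nat.cast_zero, zero_mul, map_zero]
      exact hasStrictFDerivAt_const 1 x
  | succ n ih =>
      have h := ih.mul' (hasStrictFDerivAt_id x)
      simp only [id_eq] at h
      have e1 : (fun y : C => y ^ n * y) = fun y : C => y ^ (n + 1) := by
        funext y; rw [← pow_succ]
      rw [show ((fun y : C => y ^ n) * id) = fun y : C => y ^ n * y from rfl, e1] at h
      refine h.congr_fderiv ?_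
      refine ContinuousLinearMap.ext fun h1 => ?_
      simp only [ContinuousLinearMap.add_apply, ContinuousLinearMap.smul_apply,
        ContinuousLinearMap.smulRight_apply, ContinuousLinearMap.mul_apply',
        ContinuousLinearMap.coe_id', id_eq, smul_eq_mul, MulOpposite.smul_eq_mul_unop,
        MulOpposite.unop_op]
      cases n with
      | zero => simp
      | succ m =>
          push_cast
          ring

/-- Strict derivative of polynomial evaluation on a commutative normed algebra. -/
lemma hasStrictFDerivAt_eval_aux (P : C[X]) (x : C) :
    HasStrictFDerivAt (fun y : C => P.eval y)
      (ContinuousLinearMap.mul ℂ C (P.derivative.eval x)) x := by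
  induction P using Polynomial.induction_on' with
  | add p q hp hq =>
      have h := hp.add hq
      have e1 : (fun y : C => p.eval y + q.eval y) = fun y : C => (p + q).eval y := by
        funext y; rw [eval_add]
      rw [show ((fun y : C => eval y p) + fun y : C => eval y q) = fun y : C => p.eval y + q.eval y from rfl, e1] at h
      refine h.congr_fderiv ?_
      rw [derivative_add, eval_add, map_add]
  | monomial n a =>
      have h := (hasStrictFDerivAt_pow_aux n x).const_mul a
      have e1 : (fun y : C => a * y ^ n) = fun y : C => (monomial n a).eval y := by
        funext y; rw [eval_monomial]
      rw [e1] at h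
      refine h.congr_fderiv ?_
      refine ContinuousLinearMap.ext fun h1 => ?_
      simp only [derivative_monomial, eval_monomial, ContinuousLinearMap.mul_apply',
        ContinuousLinearMap.smul_apply, smul_eq_mul]
      ring

/-- In a complete commutative complex normed algebra with dense invertible group, for every
polynomial with invertible leading coefficient the set of points where the evaluation is
invertible is dense. -/
lemma dense_isUnit_eval_aux [CompleteSpace C]
    (hG : Dense {x : C | IsUnit x}) :
    ∀ (n : ℕ) (P : C[X]), P.natDegree ≤ n → IsUnit P.leadingCoeff →
      Dense {x : C | IsUnit (P.eval x)} := by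
  intro n
  induction n with
  | zero =>
      intro P hd hl
      have hP : P = Polynomial.C (P.coeff 0) :=
        Polynomial.eq_C_of_natDegree_eq_zero (Nat.le_zero.mp hd)
      have hcoeff : IsUnit (P.coeff 0) := by
        rwa [Polynomial.leadingCoeff, Nat.le_zero.mp hd] at hl
      have : {x : C | IsUnit (P.eval x)} = Set.univ := by
        ext x
        simp only [Set.mem_setOf_eq, Set.mem_univ, iff_true]
        rw [hP]; simpa using hcoeff
      rw [this]; exact dense_univ
  | succ n ih =>
      intro P hd hl
      rcases subsingleton_or_nontrivial C with hsub | hnt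
      · have : {x : C | IsUnit (P.eval x)} = Set.univ := by
          ext x; simp [isUnit_of_subsingleton]; exact Subsingleton.elim _ _
        rw [this]; exact dense_univ
      by_cases hcase : P.natDegree ≤ n
      · exact ih P hcase hl
      have hdeg : P.natDegree = n + 1 := le_antisymm hd (not_le.mp hcase)
      -- the derivative has invertible leading coefficient and degree `n`
      have hnum : IsUnit (((n : ℕ) + 1 : C)) := by
        have h1 : IsUnit ((n + 1 : ℕ) : ℂ) := by
          have : ((n + 1 : ℕ) : ℂ) ≠ 0 := by exact_mod_cast Nat.succ_ne_zero n
          exact isUnit_iff_ne_zero.mpr this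
        have := h1.map (algebraMap ℂ C)
        rwa [map_natCast, Nat.cast_add, Nat.cast_one] at this
      have hderivcoeff : P.derivative.coeff n = P.leadingCoeff * ((n : C) + 1) := by
        rw [Polynomial.coeff_derivative, Polynomial.leadingCoeff, hdeg]
      have hunit' : IsUnit (P.derivative.coeff n) := by
        rw [hderivcoeff]; exact hl.mul hnum
      have hne : P.derivative.coeff n ≠ 0 := hunit'.ne_zero
      have hdeg' : P.derivative.natDegree = n := by
        refine le_antisymm ?_ (Polynomial.le_natDegree_of_ne_zero hne)
        have := Polynomial.natDegree_derivative_le P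
        omega
      have hl' : IsUnit P.derivative.leadingCoeff := by
        rwa [Polynomial.leadingCoeff, hdeg']
      have hdense' := ih P.derivative (le_of_eq hdeg') hl'
      -- now use the inverse function theorem
      rw [Metric.dense_iff]
      intro x₀ r hr
      obtain ⟨x₁, hx₁ball, hx₁⟩ := Metric.dense_iff.mp hdense' x₀ (r / 2) (by positivity)
      have hx₁' : IsUnit (P.derivative.eval x₁) := hx₁
      set u : Cˣ := hx₁'.unit with hu
      set e : C ≃L[ℂ] C :=
        { toFun := fun y => (u : C) * y
          invFun := fun y => ((u⁻¹ : Cˣ) : C) * y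
          map_add' := fun y z => mul_add _ _ _
          map_smul' := fun c y => mul_smul_comm c (u : C) y
          left_inv := fun y => by
            show ((u⁻¹ : Cˣ) : C) * ((u : C) * y) = y
            rw [← mul_assoc, Units.inv_mul, one_mul]
          right_inv := fun y => by
            show (u : C) * (((u⁻¹ : Cˣ) : C) * y) = y
            rw [← mul_assoc, Units.mul_inv, one_mul]
          continuous_toFun := continuous_const.mul continuous_id
          continuous_invFun := continuous_const.mul continuous_id } with he
      have hee : (e : C →L[ℂ] C) = ContinuousLinearMap.mul ℂ C (P.derivative.eval x₁) := by
        ext h1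
        show (u : C) * h1 = _
        rw [hu, IsUnit.unit_spec, ContinuousLinearMap.mul_apply']
      have hder : HasStrictFDerivAt (fun y : C => P.eval y) (e : C →L[ℂ] C) x₁ := by
        rw [hee]; exact hasStrictFDerivAt_eval_aux P x₁
      have hmap := hder.map_nhds_eq_of_equiv
      have hW : (fun y : C => P.eval y) '' Metric.ball x₁ (r / 2) ∈ 𝓝 (P.eval x₁) := by
        rw [← hmap]
        exact Filter.image_mem_map (Metric.ball_mem_nhds _ (by positivity))
      obtain ⟨y, hyG, hyW⟩ := hG.exists_mem_open isOpen_interior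
        ⟨P.eval x₁, mem_interior_iff_mem_nhds.mpr hW⟩
      obtain ⟨x, hxball, hfx⟩ := interior_subset hyW
      refine ⟨x, ?_, ?_⟩
      · rw [Metric.mem_ball] at *
        calc dist x x₀ ≤ dist x x₁ + dist x₁ x₀ := dist_triangle _ _ _
          _ < r / 2 + r / 2 := add_lt_add hxball hx₁ball
          _ = r := by ring
      · show IsUnit (P.eval x)
        have hfx' : P.eval x = y := hfx
        rw [hfx']; exact hyG

end Aux

/-- **Corollary 2.2.** Let `A` and `B` be commutative unital complex normed algebras and let
`B` be an integral extension of `A` (via a continuous injective unital algebra homomorphism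
`f : A → B`).  If `A` is a full subalgebra of its completion `Ã` and `A` has dense invertible
group, then `B` has dense invertible group. -/
theorem dense_invertibles_of_integral_extension_of_full
    (A B : Type*) [NormedCommRing A] [NormedAlgebra ℂ A]
    [NormedCommRing B] [NormedAlgebra ℂ B]
    (f : A →ₐ[ℂ] B) (hcont : Continuous f) (hinj : Function.Injective f)
    (hint : ∀ b : B, ∃ p : Polynomial A, p.Monic ∧ Polynomial.eval₂ f.toRingHom b p = 0)
    (hfull : ∀ a : A, IsUnit (↑a : UniformSpace.Completion A) → IsUnit a)
    (hA : Dense {a : A | IsUnit a}) :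
    Dense {b : B | IsUnit b} := by
  classical
  -- dense invertibles in the completion
  have hdr : DenseRange ((↑) : A → UniformSpace.Completion A) :=
    UniformSpace.Completion.denseRange_coe
  have hGtilde : Dense {x : UniformSpace.Completion A | IsUnit x} := by
    have h2 := hdr.dense_image (UniformSpace.Completion.continuous_coe A) hA
    refine h2.mono ?_
    rintro _ ⟨a, ha, rfl⟩
    exact ha.map (UniformSpace.Completion.coeRingHom)
  rw [Metric.dense_iff]
  intro b r hr
  obtain ⟨p, hmonic, hroot⟩ := hint b
  -- continuity of f at 0
  have hc0 : ∃ δ > 0, ∀ a : A, ‖a‖ < δ → ‖f a‖ < r := by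
    have hca : ContinuousAt f 0 := hcont.continuousAt
    obtain ⟨δ, hδ, h⟩ := Metric.continuousAt_iff.mp hca r hr
    refine ⟨δ, hδ, fun a ha => ?_⟩
    have hd : dist a 0 < δ := by rwa [dist_zero_right]
    have := h hd
    rwa [map_zero, dist_zero_right] at this
  obtain ⟨δ, hδ, hδf⟩ := hc0
  -- dense set of invertibility of `p` in the completion
  set P : Polynomial (UniformSpace.Completion A) :=
    p.map (UniformSpace.Completion.coeRingHom) with hP
  have hPl : IsUnit P.leadingCoeff := by
    rw [(hmonic.map (UniformSpace.Completion.coeRingHom)).leadingCoeff]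
    exact isUnit_one
  have hdense := dense_isUnit_eval_aux hGtilde P.natDegree P le_rfl hPl
  have hTopen : IsOpen {x : UniformSpace.Completion A | IsUnit (P.eval x)} :=
    Units.isOpen.preimage (Polynomial.continuous (p := P))
  -- find `a : A` with small norm and `p.eval a` invertible
  have hUopen : IsOpen ({x : UniformSpace.Completion A | IsUnit (P.eval x)} ∩
      Metric.ball 0 δ) := hTopen.inter Metric.isOpen_ball
  have hUne : ({x : UniformSpace.Completion A | IsUnit (P.eval x)} ∩
      Metric.ball 0 δ).Nonempty := by
    obtain ⟨x, hx1, hx2⟩ := Metric.dense_iff.mp hdense 0 δ hδ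
    exact ⟨x, hx2, hx1⟩
  obtain ⟨a, ha⟩ := hdr.exists_mem_open hUopen hUne
  obtain ⟨haT, haball⟩ := ha
  have hanorm : ‖a‖ < δ := by
    have := Metric.mem_ball.mp haball
    rwa [dist_zero_right, UniformSpace.Completion.norm_coe] at this
  have haunit : IsUnit (p.eval a) := by
    apply hfull
    have hcoe : ((p.eval a : A) : UniformSpace.Completion A) = P.eval (↑a) := by
      rw [hP, Polynomial.eval_map]
      exact (Polynomial.eval₂_at_apply (UniformSpace.Completion.coeRingHom : A →+* _) a).symm
    rw [hcoe]
    exact haT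
  -- the perturbed element
  set b' : B := b - f a with hb'
  set q : Polynomial A := p.comp (Polynomial.X + Polynomial.C a) with hq
  have hqmonic : q.Monic := hmonic.comp_X_add_C a
  have hq0 : Polynomial.eval₂ f.toRingHom b' q = 0 := by
    rw [hq, Polynomial.eval₂_comp]
    have : Polynomial.eval₂ f.toRingHom b' (Polynomial.X + Polynomial.C a) = b := by
      simp [hb']
    rw [this]; exact hroot
  have hqconst : q.coeff 0 = p.eval a := by
    rw [Polynomial.coeff_zero_eq_eval_zero, hq, Polynomial.eval_comp]
    simp
  -- b' divides f (p.eval a)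
  have hdvd : ∃ c : B, f (p.eval a) = b' * c := by
    have hsum := Polynomial.eval₂_eq_sum_range (p := q) f.toRingHom b'
    rw [hq0] at hsum
    rw [Finset.sum_range_succ'] at hsum
    set S : B := ∑ i ∈ Finset.range q.natDegree, f.toRingHom (q.coeff (i + 1)) * b' ^ i with hS
    have hfac : ∑ k ∈ Finset.range q.natDegree, f.toRingHom (q.coeff (k + 1)) * b' ^ (k + 1)
        = b' * S := by
      rw [hS, Finset.mul_sum]
      refine Finset.sum_congr rfl fun i _ => by ring
    have h0 : f.toRingHom (q.coeff 0) * b' ^ 0 = f (p.eval a) := by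
      rw [hqconst]; simp
    rw [hfac, h0] at hsum
    exact ⟨-S, by linear_combination -hsum⟩
  obtain ⟨c, hc⟩ := hdvd
  have hbunit : IsUnit b' := by
    have hu : IsUnit (f (p.eval a)) := haunit.map f
    rw [hc] at hu
    exact isUnit_of_mul_isUnit_left hu
  refine ⟨b', ?_, hbunit⟩
  rw [Metric.mem_ball, hb', dist_eq_norm]
  simpa using hδf a hanorm
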